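/- (Access count of the repair scheme, Theorem 7) Assume h ≥ 2 and let i_1, …, i_h ∈ {0, …, n−1} be pairwise distinct. The set A = { (b, a) : b ∈ {d−k+1, …, d−k+h}, a ∈ {0, …, s−1}^n } ∪ { (b, a) : b ∈ {1, …, d−k}, a ∈ V_{i_1} ∪ ⋯ ∪ V_{i_h} } of indices of symbols accessed at each helper node has cardinality h·s^n + (d−k)·( s^n − s^{n−h}·(s−1)^h ), and this number equals N·( 1 − ((d−k)/(d−k+h))·( 1 − 1/(d−k+1) )^h ) where N = (d−k+h)·s^n. -/

import Mathlib

open Finset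

-- Auxiliary counting lemmas

lemma fin_ne_card (s : ℕ) :
    (univ.filter (fun x : Fin s => (x : ℕ) ≠ 0)).card = s - 1 := by
  rcases s with _ | s
  · simp
  · have : (univ.filter (fun x : Fin (s+1) => (x : ℕ) ≠ 0))
        = univ.erase (0 : Fin (s+1)) := by
      ext x
      simp only [mem_filter, mem_univ, true_and, mem_erase, and_true]
      exact ⟨fun h1 h2 => h1 (by rw [h2]; rfl), fun h1 h2 => h1 (Fin.ext h2)⟩
    rw [this, card_erase_of_mem (mem_univ _)]
    simp

lemma comp_count (n h s : ℕ) (idx : Fin h → Fin n)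
    (hidx : Function.Injective idx) (hhn : h ≤ n) :
    (univ.filter (fun a : Fin n → Fin s => ∀ l, (a (idx l) : ℕ) ≠ 0)).card
      = s ^ (n - h) * (s - 1) ^ h := by
  have hset : (univ.filter (fun a : Fin n → Fin s => ∀ l, (a (idx l) : ℕ) ≠ 0))
      = Fintype.piFinset (fun i =>
          if i ∈ Finset.image idx univ then univ.filter (fun x : Fin s => (x : ℕ) ≠ 0)
          else univ) := by
    ext a
    simp only [mem_filter, mem_univ, true_and, Fintype.mem_piFinset]
    constructor
    · intro hall i
      split_ifs with hi
      · rw [Finset.mem_image] at hi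
        obtain ⟨l, _, rfl⟩ := hi
        simpa using hall l
      · simp
    · intro hall l
      have := hall (idx l)
      rw [if_pos (Finset.mem_image.mpr ⟨l, mem_univ l, rfl⟩)] at this
      simpa using this
  rw [hset, Fintype.card_piFinset]
  have himg : (Finset.image idx univ).card = h := by
    rw [Finset.card_image_of_injective _ hidx, card_univ, Fintype.card_fin]
  have hfilt : (univ.filter (fun i : Fin n => i ∈ Finset.image idx univ)) = Finset.image idx univ := by
    simp
  calc (∏ i : Fin n, ((if i ∈ Finset.image idx univ
          then univ.filter (fun x : Fin s => (x : ℕ) ≠ 0) else univ) : Finset (Fin s)).card)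
      = ∏ i : Fin n, (if i ∈ Finset.image idx univ then s - 1 else s) := by
        apply Finset.prod_congr rfl
        intro i _
        split_ifs
        · exact fin_ne_card s
        · simp
    _ = s ^ (n - h) * (s - 1) ^ h := by
        rw [Finset.prod_ite, Finset.prod_const, Finset.prod_const, hfilt, himg,
          Finset.filter_not, hfilt, card_sdiff_of_subset (Finset.subset_univ _), himg,
          card_univ, Fintype.card_fin, mul_comm]

/-- The set of indices `(b, a)` of symbols accessed at each helper node during
the proposed repair scheme: all symbols in layers `b ∈ {d-k+1,…,d-k+h}`,
together with the symbols indexed by `a ∈ V_{i_1} ∪ ⋯ ∪ V_{i_h}` in layers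
`b ∈ {1,…,d-k}`, where `V_i = {a ∈ {0,…,s-1}^n : a_i = 0}` and the failed
nodes are `idx 0, …, idx (h-1)`. -/
def accessSet (n k d h s : ℕ) (idx : Fin h → Fin n) :
    Finset (ℕ × (Fin n → Fin s)) :=
  (Finset.Icc (d - k + 1) (d - k + h)) ×ˢ (Finset.univ : Finset (Fin n → Fin s))
    ∪ (Finset.Icc 1 (d - k)) ×ˢ
        (Finset.univ.filter (fun a : Fin n → Fin s => ∃ l : Fin h, (a (idx l) : ℕ) = 0))

/-- Theorem 7 (access count): the number of symbols accessed at each helper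
node is `h·s^n + (d-k)·(s^n - s^(n-h)·(s-1)^h)`, which equals
`N·(1 - ((d-k)/(d-k+h))·(1 - 1/(d-k+1))^h)` where `N = (d-k+h)·s^n`. -/
theorem access_count (n k d h s N : ℕ) (hk0 : 0 < k) (hkd : k < d)
    (hdn : d + h ≤ n) (hh : 2 ≤ h)
    (hs : s = d - k + 1) (hN : N = (d - k + h) * s ^ n)
    (idx : Fin h → Fin n) (hidx : Function.Injective idx) :
    (accessSet n k d h s idx).card
        = h * s ^ n + (d - k) * (s ^ n - s ^ (n - h) * (s - 1) ^ h)
      ∧ ((accessSet n k d h s idx).card : ℝ)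
        = (N : ℝ) * (1 - ((d - k : ℕ) : ℝ) / ((d - k + h : ℕ) : ℝ)
            * (1 - 1 / ((d - k + 1 : ℕ) : ℝ)) ^ h) := by
  have hm : 1 ≤ d - k := by omega
  have hhn : h ≤ n := by omega
  have hs2 : 2 ≤ s := by omega
  have e1 : d - k + h + 1 - (d - k + 1) = h := by omega
  have e2 : d - k + 1 - 1 = d - k := by omega
  have hcast1 : ((s - 1 : ℕ) : ℝ) = (s:ℝ) - 1 := by
    rw [Nat.cast_sub (by omega)]; simp
  have hsub : s ^ (n - h) * (s - 1) ^ h ≤ s ^ n := by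
    calc s ^ (n - h) * (s - 1) ^ h ≤ s ^ (n - h) * s ^ h :=
      Nat.mul_le_mul_left _ (Nat.pow_le_pow_left (Nat.sub_le s 1) h)
    _ = s ^ n := by rw [← pow_add, Nat.sub_add_cancel hhn]
  have hdisj : Disjoint ((Finset.Icc (d - k + 1) (d - k + h)) ×ˢ (Finset.univ : Finset (Fin n → Fin s)))
      ((Finset.Icc 1 (d - k)) ×ˢ
        (Finset.univ.filter (fun a : Fin n → Fin s => ∃ l : Fin h, (a (idx l) : ℕ) = 0))) := by
    apply Finset.disjoint_left.mpr
    rintro ⟨b, a⟩ h1 h2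
    simp only [Finset.mem_product, Finset.mem_Icc] at h1 h2
    obtain ⟨⟨hb1, hb2⟩, -⟩ := h1
    obtain ⟨⟨hb3, hb4⟩, -⟩ := h2
    omega
  -- cardinality of the filter
  have hfilt : (univ.filter (fun a : Fin n → Fin s => ∃ l : Fin h, (a (idx l) : ℕ) = 0)).card
      = s ^ n - s ^ (n - h) * (s - 1) ^ h := by
    have hsum := Finset.card_filter_add_card_filter_not
      (s := (univ : Finset (Fin n → Fin s)))
      (p := fun a : Fin n → Fin s => ∃ l : Fin h, (a (idx l) : ℕ) = 0)
    have hneg : (univ.filter (fun a : Fin n → Fin s => ¬ ∃ l : Fin h, (a (idx l) : ℕ) = 0))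
        = (univ.filter (fun a : Fin n → Fin s => ∀ l, (a (idx l) : ℕ) ≠ 0)) := by
      apply Finset.filter_congr
      intro a _
      push_neg
      rfl
    rw [hneg, comp_count n h s idx hidx hhn, card_univ] at hsum
    have hcu : Fintype.card (Fin n → Fin s) = s ^ n := by simp
    rw [hcu] at hsum
    generalize hG : (univ.filter (fun a : Fin n → Fin s => ∃ l : Fin h, (a (idx l) : ℕ) = 0)).card = A at hsum ⊢
    clear hG hdisj
    omega
  have hcard : (accessSet n k d h s idx).card
      = h * s ^ n + (d - k) * (s ^ n - s ^ (n - h) * (s - 1) ^ h) := by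
    rw [accessSet, Finset.card_union_of_disjoint hdisj, Finset.card_product,
      Finset.card_product, hfilt, Nat.card_Icc, Nat.card_Icc, card_univ]
    have : Fintype.card (Fin n → Fin s) = s ^ n := by simp
    rw [this, e1, e2]
  refine ⟨hcard, ?_⟩
  rw [hcard, hN, ← hs]
  have hs0 : (0:ℝ) < (s:ℝ) := by positivity
  have hmh0 : (0:ℝ) < ((d - k + h : ℕ) : ℝ) := by positivity
  have hsn : ((s:ℝ)) ^ n = (s:ℝ) ^ (n - h) * (s:ℝ) ^ h := by
    rw [← pow_add, Nat.sub_add_cancel hhn]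
  push_cast [Nat.cast_sub hsub, hcast1]
  rw [hsn]
  have h1 : (1:ℝ) - 1 / (s:ℝ) = ((s:ℝ) - 1) / (s:ℝ) := by
    field_simp
  rw [h1, div_pow]
  field_simp
  ring
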